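/- The entropy H_n of the random-BST shape distribution satisfies H_n ~ c·n as n → ∞, where c = 2 Σ_{i=2}^{∞} lg(i)/((i+2)(i+1)), i.e., H_n / n converges to c. -/

import Mathlib

open Filter Real

/-- Binary trees: empty (`leaf`) or a node with left and right subtrees. -/
inductive BinTree where
  | leaf : BinTree
  | node : BinTree → BinTree → BinTree
deriving DecidableEq, Repr

namespace BinTree

/-- Number of nodes. -/
def size : BinTree → ℕ
  | leaf => 0
  | node l r => l.size + r.size + 1

/-- Product of subtree sizes over all nodes: `∏_{v∈t} st(v)`. -/
def stProd : BinTree → ℕ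
  | leaf => 1
  | node l r => (node l r).size * l.stProd * r.stProd

/-- Subtree-size entropy: `H_st(t) = ∑_{v∈t} lg st(v)`. -/
noncomputable def stEntropy : BinTree → ℝ
  | leaf => 0
  | node l r => Real.logb 2 ((node l r).size : ℝ) + l.stEntropy + r.stEntropy

/-- Size of the left subtree of the root. -/
def leftSize : BinTree → ℕ
  | leaf => 0
  | node l _ => l.size

/-- Every node has at most one (nonempty) child. -/
def isPath : BinTree → Prop
  | leaf => True
  | node l r => (l = leaf ∨ r = leaf) ∧ l.isPath ∧ r.isPath

/-- At every node the sizes of the two subtrees differ by at most 1. -/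
def isBalanced : BinTree → Prop
  | leaf => True
  | node l r => ((l.size : ℤ) - (r.size : ℤ)).natAbs ≤ 1 ∧ l.isBalanced ∧ r.isBalanced

/-- Number of leaves (nodes with no children). -/
def leafCount : BinTree → ℕ
  | leaf => 0
  | node l r => (if l = leaf ∧ r = leaf then 1 else 0) + l.leafCount + r.leafCount

/-- Number of binary nodes (both children present). -/
def binCount : BinTree → ℕ
  | leaf => 0
  | node l r => (if l ≠ leaf ∧ r ≠ leaf then 1 else 0) + l.binCount + r.binCount

/-- Number of nodes with only a left child. -/
def leftOnlyCount : BinTree → ℕ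
  | leaf => 0
  | node l r => (if l ≠ leaf ∧ r = leaf then 1 else 0) + l.leftOnlyCount + r.leftOnlyCount

/-- Number of nodes with only a right child. -/
def rightOnlyCount : BinTree → ℕ
  | leaf => 0
  | node l r => (if l = leaf ∧ r ≠ leaf then 1 else 0) + l.rightOnlyCount + r.rightOnlyCount

end BinTree

/-- Cartesian tree construction with explicit fuel (fuel ≥ length suffices). -/
def cartesianAux : ℕ → List ℕ → BinTree
  | 0, _ => .leaf
  | _ + 1, [] => .leaf
  | fuel + 1, x :: xs =>
      let m := List.foldl min x xs
      let i := (x :: xs).idxOf m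
      .node (cartesianAux fuel ((x :: xs).take i)) (cartesianAux fuel ((x :: xs).drop (i + 1)))

/-- The Cartesian tree of a list: root at the (first) minimum, left/right
subtrees built recursively from the prefix/suffix. -/
def cartesian (l : List ℕ) : BinTree := cartesianAux l.length l

/-- The array `A[1..n]` (as a list) associated with a permutation of `Fin n`. -/
def permList {n : ℕ} (p : Equiv.Perm (Fin n)) : List ℕ := List.ofFn fun k => (p k : ℕ)

/-- All binary trees with exactly `n` nodes. -/
def treesOfSize : ℕ → Finset BinTree
  | 0 => {BinTree.leaf}
  | n + 1 =>
    (Finset.range (n + 1)).attach.biUnion fun i =>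
      ((treesOfSize i.1) ×ˢ (treesOfSize (n - i.1))).image fun p => BinTree.node p.1 p.2
termination_by n => n
decreasing_by
  · exact Nat.lt_succ_of_le (Nat.le_of_lt_succ (Finset.mem_range.mp i.2))
  · exact Nat.lt_succ_of_le (Nat.sub_le n i.1)

/-- Shannon entropy (base 2) of the random-BST shape distribution on `n` nodes,
which assigns probability `1/stProd t` to each tree `t` on `n` nodes. -/
noncomputable def shapeEntropy (n : ℕ) : ℝ :=
  - ∑ t ∈ treesOfSize n, (1 / (t.stProd : ℝ)) * Real.logb 2 (1 / (t.stProd : ℝ))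

/-- Expectation of `f` under the random-BST shape distribution on `n` nodes. -/
noncomputable def expCount (f : BinTree → ℕ) (n : ℕ) : ℝ :=
  ∑ t ∈ treesOfSize n, (1 / (t.stProd : ℝ)) * (f t : ℝ)

/-- The entropy recurrence: `H 0 = H 1 = 0`, `H n = lg n + (2/n) ∑_{i<n} H i`. -/
noncomputable def Hrec : ℕ → ℝ
  | 0 => 0
  | 1 => 0
  | n + 2 =>
      Real.logb 2 ((n + 2 : ℕ) : ℝ) +
        (2 / ((n + 2 : ℕ) : ℝ)) * ∑ i ∈ (Finset.range (n + 2)).attach, Hrec i.1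
termination_by n => n
decreasing_by exact Finset.mem_range.mp i.2

/-- `rmq_A(i,j)` (1-based): the position of the (first) minimum of `A[i..j]`. -/
def rmqFun (A : List ℕ) (i j : ℕ) : ℕ :=
  let s := (A.drop (i - 1)).take (j - i + 1)
  i + s.idxOf (List.foldl min (s.headD 0) s)

/-- The inorder rank of the LCA of the nodes with inorder ranks `i` and `j`. -/
def lcaInorder : BinTree → ℕ → ℕ → ℕ
  | .leaf, _, _ => 0
  | .node l r, i, j =>
      let m := l.size + 1
      if i < m ∧ j < m then lcaInorder l i j
      else if m < i ∧ m < j then m + lcaInorder r (i - m) (j - m)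
      else m

/-- The subtree rooted at the node reached from the root by the given
left(`false`)/right(`true`) directions, if it exists. -/
def subAt : BinTree → List Bool → Option BinTree
  | t, [] => some t
  | .leaf, _ :: _ => none
  | .node l _, false :: p => subAt l p
  | .node _ r, true :: p => subAt r p

/-- Subtree size of the node at a position (0 if there is no node there). -/
def stAt (t : BinTree) (pos : List Bool) : ℕ := ((subAt t pos).getD .leaf).size

/-- Left-subtree size of the node at a position. -/
def lsAt (t : BinTree) (pos : List Bool) : ℕ := ((subAt t pos).getD .leaf).leftSize

/-- `Pruned μ s`: `μ` is obtained from `s` by replacing some subtrees by `leaf`. -/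
inductive Pruned : BinTree → BinTree → Prop
  | leaf (t) : Pruned .leaf t
  | node {l' r' l r} : Pruned l' l → Pruned r' r → Pruned (.node l' r') (.node l r)

/-- `PrunedN k μ s`: `μ` is obtained from `s` by pruning exactly `k` (nonempty) subtrees. -/
inductive PrunedN : ℕ → BinTree → BinTree → Prop
  | refl (t) : PrunedN 0 t t
  | prune (l r) : PrunedN 1 .leaf (.node l r)
  | node {a b l' r' l r} : PrunedN a l' l → PrunedN b r' r → PrunedN (a + b) (.node l' r') (.node l r)

/-- `IsSubtree s t`: `s` is the subtree of `t` rooted at some node (or `t` itself). -/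
inductive IsSubtree : BinTree → BinTree → Prop
  | refl (t) : IsSubtree t t
  | left {s l r} : IsSubtree s l → IsSubtree s (.node l r)
  | right {s l r} : IsSubtree s r → IsSubtree s (.node l r)

/-- `∑_{v∈μ} lg st_s(v)`: sum over the nodes of `μ` of the log-subtree-sizes
taken in the host tree `s` (for `μ` pruned from `s`). -/
noncomputable def mixedEntropy : BinTree → BinTree → ℝ
  | .leaf, _ => 0
  | .node _ _, .leaf => 0
  | .node l' r', .node l r =>
      Real.logb 2 ((BinTree.node l r).size : ℝ) + mixedEntropy l' l + mixedEntropy r' r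

/-- 1-based preorder index of the node at a position (0 if no node there). -/
def preorderIdx : BinTree → List Bool → ℕ
  | _, [] => 1
  | .leaf, _ :: _ => 0
  | .node l _, false :: p => 1 + preorderIdx l p
  | .node l r, true :: p => 1 + l.size + preorderIdx r p

/-- 1-based inorder index of the node at a position. -/
def inorderIdx : BinTree → List Bool → ℕ
  | t, [] => t.leftSize + 1
  | .leaf, _ :: _ => 0
  | .node l _, false :: p => inorderIdx l p
  | .node l r, true :: p => l.size + 1 + inorderIdx r p

/-- Binary entropy function (base 2). -/
noncomputable def binH (x : ℝ) : ℝ := -x * Real.logb 2 x - (1 - x) * Real.logb 2 (1 - x)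
noncomputable def gG (i : ℕ) : ℝ := 2 * Real.logb 2 ((i:ℝ)+2) / (((i:ℝ)+3)*((i:ℝ)+4))

lemma gGn (n : ℕ) : (((n:ℝ)+3)*((n:ℝ)+4)) * gG n = 2 * Real.logb 2 ((n:ℝ)+2) := by
  have h4 : ((n:ℝ)+3) ≠ 0 := by positivity
  have h5 : ((n:ℝ)+4) ≠ 0 := by positivity
  rw [gG]; field_simp

lemma algebra_sum (n : ℕ) :
    2 * ∑ k ∈ Finset.range n, (((k:ℝ)+3) * (∑ i ∈ Finset.range k, gG i) + Real.logb 2 ((k:ℝ)+2))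
      = ((n:ℝ)+2)*((n:ℝ)+3) * ∑ i ∈ Finset.range n, gG i := by
  induction n with
  | zero => simp
  | succ n ih =>
    rw [Finset.sum_range_succ, Finset.sum_range_succ (f := gG)]
    push_cast
    linear_combination ih - gGn n

lemma key (n : ℕ) :
    Hrec (n+2) = ((n:ℝ)+3) * (∑ i ∈ Finset.range n, gG i) + Real.logb 2 ((n:ℝ)+2) := by
  induction n using Nat.strong_induction_on with
  | _ n ih =>
    rw [Hrec]
    rw [Finset.sum_attach (Finset.range (n+2)) (fun i => Hrec i)]
    rw [Finset.sum_range_succ', Finset.sum_range_succ']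
    have hsum : ∀ k ∈ Finset.range n, Hrec (k+1+1)
        = ((k:ℝ)+3) * (∑ i ∈ Finset.range k, gG i) + Real.logb 2 ((k:ℝ)+2) := by
      intro k hk; exact ih k (Finset.mem_range.mp hk)
    rw [Finset.sum_congr rfl hsum]
    have h0 : Hrec 0 = 0 := by rw [Hrec]
    have h1 : Hrec (0+1) = 0 := by rw [Hrec]
    rw [h0, h1, add_zero, add_zero]
    have h2 : ((n:ℝ)+2) ≠ 0 := by positivity
    have h := algebra_sum n
    push_cast
    field_simp
    linear_combination h

lemma gG_nonneg (i : ℕ) : 0 ≤ gG i := by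
  rw [gG]
  have : 0 ≤ Real.logb 2 ((i:ℝ)+2) :=
    Real.logb_nonneg (by norm_num) (by push_cast; linarith [Nat.cast_nonneg (α := ℝ) i])
  positivity

lemma gG_le (i : ℕ) : gG i ≤ (4 / Real.log 2) * (1 / ((i:ℝ)+2) ^ ((3:ℝ)/2)) := by
  set x : ℝ := (i:ℝ)+2 with hxdef
  have hx0 : (0:ℝ) < x := by positivity
  have hpow : (0:ℝ) < x ^ ((3:ℝ)/2) := Real.rpow_pos_of_pos hx0 _
  have hlog2 : (0:ℝ) < Real.log 2 := Real.log_pos (by norm_num)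
  have hlog : Real.log x ≤ 2 * Real.sqrt x := by
    have h := Real.log_le_sub_one_of_pos (Real.sqrt_pos.mpr hx0)
    rw [Real.log_sqrt hx0.le] at h
    nlinarith [Real.sqrt_nonneg x]
  have hs : Real.sqrt x * x ^ ((3:ℝ)/2) = x^2 := by
    rw [Real.sqrt_eq_rpow, ← Real.rpow_natCast x 2, ← Real.rpow_add hx0]
    norm_num
  have key2 : Real.log x * x ^ ((3:ℝ)/2) ≤ 2 * ((x+1)*(x+2)) := by
    calc Real.log x * x ^ ((3:ℝ)/2) ≤ (2 * Real.sqrt x) * x ^ ((3:ℝ)/2) :=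
          mul_le_mul_of_nonneg_right hlog hpow.le
      _ = 2 * x^2 := by rw [mul_assoc, hs]
      _ ≤ 2 * ((x+1)*(x+2)) := by nlinarith
  have hmain : Real.log x / ((x+1)*(x+2)) ≤ 2 / x ^ ((3:ℝ)/2) := by
    rw [div_le_div_iff₀ (by positivity) hpow]
    linarith
  have e1 : gG i = (2 / Real.log 2) * (Real.log x / ((x+1)*(x+2))) := by
    rw [gG, Real.logb, hxdef]; push_cast; ring_nf
  have e2 : (4 / Real.log 2) * (1 / x ^ ((3:ℝ)/2)) = (2 / Real.log 2) * (2 / x ^ ((3:ℝ)/2)) := by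
    ring
  rw [e1, e2]
  exact mul_le_mul_of_nonneg_left hmain (by positivity)

lemma summable_gG : Summable gG := by
  apply Summable.of_nonneg_of_le gG_nonneg gG_le
  apply Summable.mul_left
  have h1 : Summable (fun n : ℕ => 1 / (n:ℝ) ^ ((3:ℝ)/2)) :=
    Real.summable_one_div_nat_rpow.mpr (by norm_num)
  have h2 := (summable_nat_add_iff 2).mpr h1
  apply h2.congr
  intro i
  push_cast
  ring_nf

lemma log_div_tendsto : Tendsto (fun n : ℕ => Real.logb 2 ((n:ℝ)+2) / ((n:ℝ)+2)) atTop (nhds 0) := by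
  have hx : Tendsto (fun n : ℕ => (n:ℝ)+2) atTop atTop :=
    tendsto_atTop_add_const_right _ 2 tendsto_natCast_atTop_atTop
  have base : Tendsto (fun x : ℝ => Real.log x ^ 1 / (1 * x + 0)) atTop (nhds 0) :=
    Real.tendsto_pow_log_div_mul_add_atTop 1 0 1 one_ne_zero
  have base' : Tendsto (fun x : ℝ => Real.log x / x) atTop (nhds 0) := by
    simpa using base
  have comp := (base'.comp hx).div_const (Real.log 2)
  simp only [Function.comp] at comp
  rw [zero_div] at comp
  apply comp.congr
  intro n
  rw [Real.logb]
  ring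


/-- `H_n ~ c n` where `c = 2 ∑_{i≥2} lg i / ((i+2)(i+1))`, i.e. `H_n/n → c`. -/
theorem stmt4 :
    Filter.Tendsto (fun n : ℕ => Hrec n / (n : ℝ)) Filter.atTop
      (nhds (2 * ∑' i : ℕ,
        Real.logb 2 ((i : ℝ) + 2) / (((i : ℝ) + 4) * ((i : ℝ) + 3)))) := by
  have htsum : (2 : ℝ) * ∑' i : ℕ, Real.logb 2 ((i : ℝ) + 2) / (((i : ℝ) + 4) * ((i : ℝ) + 3))
      = ∑' i, gG i := by
    rw [← tsum_mul_left]
    congr 1; funext i; rw [gG]; ring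
  rw [htsum]
  rw [← Filter.tendsto_add_atTop_iff_nat 2]
  have hrw : ∀ n : ℕ, Hrec (n+2) / ((n+2 : ℕ) : ℝ)
      = (1 + 1/((n:ℝ)+2)) * (∑ i ∈ Finset.range n, gG i)
        + Real.logb 2 ((n:ℝ)+2) / ((n:ℝ)+2) := by
    intro n
    rw [key]
    have h2 : ((n:ℝ)+2) ≠ 0 := by positivity
    push_cast
    field_simp
    ring_nf
  simp only [hrw]
  have t1 : Tendsto (fun n : ℕ => 1/((n:ℝ)+2)) atTop (nhds 0) := by
    have hx : Tendsto (fun n : ℕ => (n:ℝ)+2) atTop atTop :=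
      tendsto_atTop_add_const_right _ 2 tendsto_natCast_atTop_atTop
    simpa [one_div, Pi.inv_def] using hx.inv_tendsto_atTop
  have t2 : Tendsto (fun n : ℕ => ∑ i ∈ Finset.range n, gG i) atTop (nhds (∑' i, gG i)) :=
    summable_gG.hasSum.tendsto_sum_nat
  have h := (((tendsto_const_nhds (x := (1:ℝ)) (f := atTop (α := ℕ))).add t1).mul t2).add log_div_tendsto
  have h0 : ((1:ℝ) + 0) * (∑' i, gG i) + 0 = ∑' i, gG i := by ring
  rw [← h0]
  exact h
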